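/- Let B ⊆ ℂ be finite with a unique element b₀ of maximal modulus |b₀| > 0, and let c : B → ℂ with c_{b₀} ≠ 0. Then the function f(z) = Σ_{b∈B} c_b e^{πi(bz + b̄/z)} does not vanish identically on ℂ \ {0}; in fact, choosing θ with |θ|=1 and πi b₀ θ = π|b₀|, one has |f(θt)| → ∞ as t → +∞. -/

import Mathlib

open Complex Filter

/-- If B has a unique element b₀ of maximal (positive) modulus with nonzero coefficient, then
along the ray z = θt with πi b₀ θ = π|b₀|, the function |f(θt)| tends to infinity; in
particular f does not vanish identically on ℂ \ {0}. -/
theorem exp_sum_dominant_term_blows_up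
    (B : Finset ℂ) (c : ℂ → ℂ) (b₀ : ℂ) (hb₀ : b₀ ∈ B) (hb₀pos : 0 < ‖b₀‖)
    (hmax : ∀ b ∈ B, b ≠ b₀ → ‖b‖ < ‖b₀‖)
    (hc : c b₀ ≠ 0)
    (θ : ℂ) (hθ : ‖θ‖ = 1)
    (hθeq : (Real.pi : ℂ) * Complex.I * b₀ * θ = (Real.pi : ℂ) * ‖b₀‖) :
    (¬ ∀ z : ℂ, z ≠ 0 →
        ∑ b ∈ B, c b * Complex.exp (Real.pi * Complex.I * (b * z + (starRingEnd ℂ) b / z)) = 0)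
      ∧ Tendsto (fun t : ℝ => ‖
          (∑ b ∈ B, c b * Complex.exp (Real.pi * Complex.I *
            (b * (θ * t) + (starRingEnd ℂ) b / (θ * t))))‖)
        atTop atTop := by
  set M : ℝ := Real.pi * ‖b₀‖ with hMdef
  have hMpos : 0 < M := mul_pos Real.pi_pos hb₀pos
  have hθ0 : θ ≠ 0 := by
    intro h; rw [h] at hθ; simp at hθ
  -- notation for terms
  set term : ℂ → ℝ → ℂ := fun b t => c b * Complex.exp (Real.pi * Complex.I *
      (b * (θ * t) + (starRingEnd ℂ) b / (θ * t))) with hterm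
  -- abs of each term
  have habs : ∀ (b : ℂ) (t : ℝ), ‖term b t‖ =
      ‖c b‖ * Real.exp (((Real.pi : ℂ) * Complex.I * b * θ).re * t
        + (((Real.pi : ℂ) * Complex.I * (starRingEnd ℂ) b) / (θ * t)).re) := by
    intro b t
    rw [hterm, norm_mul, Complex.norm_exp]
    congr 1
    rw [show ((Real.pi : ℂ) * Complex.I * (b * (θ * (t : ℂ)) + (starRingEnd ℂ) b / (θ * t)))
        = (t : ℂ) * ((Real.pi : ℂ) * Complex.I * b * θ)
          + ((Real.pi : ℂ) * Complex.I * (starRingEnd ℂ) b) / (θ * t) from by ring,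
      Complex.add_re, Complex.re_ofReal_mul]
    ring
  -- the small correction terms are bounded
  have htail : ∀ (b : ℂ) (t : ℝ), 1 ≤ t →
      |(((Real.pi : ℂ) * Complex.I * (starRingEnd ℂ) b) / (θ * t)).re| ≤
        Real.pi * ‖b‖ := by
    intro b t ht
    have h0 : (0 : ℝ) < t := lt_of_lt_of_le one_pos ht
    refine le_trans (Complex.abs_re_le_norm _) ?_
    rw [norm_div, norm_mul, norm_mul, norm_mul]
    simp only [Complex.norm_real, Real.norm_eq_abs, Complex.norm_I, Complex.norm_conj,
      abs_of_pos Real.pi_pos, hθ, abs_of_pos h0, mul_one, one_mul]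
    rw [div_le_iff₀ h0]
    nlinarith [mul_nonneg (mul_nonneg Real.pi_pos.le (norm_nonneg b)) (sub_nonneg.2 ht)]
  -- the main exponents
  have hr : ∀ b : ℂ, ((Real.pi : ℂ) * Complex.I * b * θ).re ≤ Real.pi * ‖b‖ := by
    intro b
    refine le_trans (Complex.re_le_norm _) ?_
    rw [norm_mul, norm_mul, norm_mul]
    simp [Complex.norm_real, Complex.norm_I, hθ, abs_of_pos Real.pi_pos]
  have hr0 : ((Real.pi : ℂ) * Complex.I * b₀ * θ).re = M := by
    rw [hθeq, ← Complex.ofReal_mul, Complex.ofReal_re]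
  -- the comparison function
  set A : ℝ := ‖c b₀‖ * Real.exp (-M) with hAdef
  have hApos : 0 < A := mul_pos (by simpa using hc) (Real.exp_pos _)
  set G : ℝ → ℝ := fun t => Real.exp (M * t) *
      (A - ∑ b ∈ B.erase b₀, ‖c b‖ * Real.exp (Real.pi * ‖b‖) *
        Real.exp ((((Real.pi : ℂ) * Complex.I * b * θ).re - M) * t)) with hGdef
  have hGeq : ∀ t : ℝ, G t = ‖c b₀‖ * Real.exp (M * t - M)
      - ∑ b ∈ B.erase b₀, ‖c b‖ *
          Real.exp (((Real.pi : ℂ) * Complex.I * b * θ).re * t + Real.pi * ‖b‖) := by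
    intro t
    simp only [hGdef]
    rw [mul_sub, Finset.mul_sum]
    congr 1
    · rw [show M * t - M = M * t + -M from by ring, Real.exp_add, hAdef]; ring
    · refine Finset.sum_congr rfl fun b _ => ?_
      rw [show ((Real.pi : ℂ) * Complex.I * b * θ).re * t + Real.pi * ‖b‖
          = M * t + (Real.pi * ‖b‖
            + (((Real.pi : ℂ) * Complex.I * b * θ).re - M) * t) from by ring,
        Real.exp_add, Real.exp_add]
      ring
  -- G is a lower bound eventually
  have hGle : ∀ t : ℝ, 1 ≤ t →
      G t ≤ ‖∑ b ∈ B, term b t‖ := by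
    intro t ht
    have hsplit : (∑ b ∈ B, term b t) = term b₀ t + ∑ b ∈ B.erase b₀, term b t := by
      rw [Finset.add_sum_erase B (fun b => term b t) hb₀]
    have h1 : ‖term b₀ t‖ ≤ ‖∑ b ∈ B, term b t‖
        + ‖∑ b ∈ B.erase b₀, term b t‖ := by
      have h := norm_add_le (∑ b ∈ B, term b t) (-(∑ b ∈ B.erase b₀, term b t))
      rw [norm_neg] at h
      refine le_trans (le_of_eq ?_) h
      congr 1
      rw [hsplit]; ring
    have h2 : ‖∑ b ∈ B.erase b₀, term b t‖ ≤
        ∑ b ∈ B.erase b₀, ‖c b‖ *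
          Real.exp (((Real.pi : ℂ) * Complex.I * b * θ).re * t + Real.pi * ‖b‖) := by
      refine le_trans (norm_sum_le _ _) (Finset.sum_le_sum fun b hb => ?_)
      rw [habs]
      refine mul_le_mul_of_nonneg_left (Real.exp_le_exp.2 (add_le_add_right ?_ _))
        (norm_nonneg _)
      exact le_trans (le_abs_self _) (htail b t ht)
    have h3 : ‖c b₀‖ * Real.exp (M * t - M) ≤ ‖term b₀ t‖ := by
      rw [habs, hr0]
      refine mul_le_mul_of_nonneg_left (Real.exp_le_exp.2 ?_) (norm_nonneg _)
      have := htail b₀ t ht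
      rw [abs_le] at this
      have := this.1
      simp only [← hMdef] at this ⊢
      linarith
    rw [hGeq]
    linarith
  -- G tends to atTop
  have hG : Tendsto G atTop atTop := by
    have h1 : Tendsto (fun t : ℝ => Real.exp (M * t)) atTop atTop :=
      Real.tendsto_exp_atTop.comp (Tendsto.const_mul_atTop hMpos tendsto_id)
    have h2 : Tendsto (fun t : ℝ => A - ∑ b ∈ B.erase b₀,
        ‖c b‖ * Real.exp (Real.pi * ‖b‖) *
          Real.exp ((((Real.pi : ℂ) * Complex.I * b * θ).re - M) * t)) atTop (nhds A) := by
      have hsum : Tendsto (fun t : ℝ => ∑ b ∈ B.erase b₀,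
          ‖c b‖ * Real.exp (Real.pi * ‖b‖) *
            Real.exp ((((Real.pi : ℂ) * Complex.I * b * θ).re - M) * t)) atTop (nhds 0) := by
        have : Tendsto (fun t : ℝ => ∑ b ∈ B.erase b₀,
            ‖c b‖ * Real.exp (Real.pi * ‖b‖) *
              Real.exp ((((Real.pi : ℂ) * Complex.I * b * θ).re - M) * t)) atTop
            (nhds (∑ b ∈ B.erase b₀, (0 : ℝ))) := by
          refine tendsto_finset_sum _ fun b hb => ?_
          have hbB : b ∈ B := Finset.mem_of_mem_erase hb
          have hbne : b ≠ b₀ := Finset.ne_of_mem_erase hb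
          have hneg : ((Real.pi : ℂ) * Complex.I * b * θ).re - M < 0 := by
            have := hr b
            have h4 : Real.pi * ‖b‖ < M :=
              (mul_lt_mul_iff_right₀ Real.pi_pos).2 (hmax b hbB hbne)
            linarith
          have hexp : Tendsto (fun t : ℝ =>
              Real.exp ((((Real.pi : ℂ) * Complex.I * b * θ).re - M) * t)) atTop (nhds 0) := by
            apply Real.tendsto_exp_atBot.comp
            exact tendsto_const_mul_atBot_of_neg hneg |>.2 tendsto_id
          simpa using hexp.const_mul (‖c b‖ * Real.exp (Real.pi * ‖b‖))
        simpa using this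
      simpa using (tendsto_const_nhds (x := A)).sub hsum
    simpa [hGdef] using h1.atTop_mul_pos hApos h2
  have hT : Tendsto (fun t : ℝ => ‖∑ b ∈ B, term b t‖) atTop atTop := by
    refine tendsto_atTop_mono' atTop ?_ hG
    filter_upwards [eventually_ge_atTop (1 : ℝ)] with t ht using hGle t ht
  refine ⟨?_, hT⟩
  intro hall
  obtain ⟨t, ht1, htF⟩ := ((eventually_ge_atTop (1 : ℝ)).and (hT.eventually_ge_atTop 1)).exists
  have hz : θ * (t : ℂ) ≠ 0 := by
    refine mul_ne_zero hθ0 ?_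
    exact_mod_cast ne_of_gt (lt_of_lt_of_le one_pos ht1)
  have := hall (θ * t) hz
  rw [hterm] at htF
  simp only [this] at htF
  simp at htF
  linarith
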